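/- Let f ∈ K[x,y] be a coordinate with deg f > 1 over a field K, and suppose (f,g) and (f,g₁) are automorphisms with deg g < deg f and deg g₁ < deg f. Then g₁ = c·g + d for some nonzero c ∈ K and d ∈ K. -/

import Mathlib

set_option linter.unusedSectionVars false

open MvPolynomial Polynomial

section Deg
variable {K : Type*} {σ : Type*} [CommRing K] [IsDomain K]

private lemma hc_top_eq_self {p : MvPolynomial σ K} (hp0 : p.totalDegree = 0) :
    homogeneousComponent p.totalDegree p = p := by
  rw [hp0]
  rw [homogeneousComponent_of_mem ((totalDegree_zero_iff_isHomogeneous (σ := σ)).mp hp0), if_pos rfl]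

private lemma hc_top_ne_zero {p : MvPolynomial σ K} (hp : p ≠ 0) :
    homogeneousComponent p.totalDegree p ≠ 0 := by
  obtain ⟨d, hd, hdeg⟩ := Finset.exists_mem_eq_sup p.support
    (support_nonempty.mpr hp) Finsupp.degree
  intro h
  have hc := coeff_homogeneousComponent (n := p.totalDegree) (φ := p) d
  rw [h, MvPolynomial.coeff_zero,
    if_pos (show d.degree = p.totalDegree from hdeg.symm)] at hc
  exact (MvPolynomial.mem_support_iff.mp hd) hc.symm

private lemma td_sub_hc_lt {p : MvPolynomial σ K} (hd : 0 < p.totalDegree) :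
    (p - homogeneousComponent p.totalDegree p).totalDegree < p.totalDegree := by
  refine Finset.sup_lt_iff hd |>.mpr ?_
  intro d hdsup
  rw [MvPolynomial.mem_support_iff, MvPolynomial.coeff_sub,
    coeff_homogeneousComponent] at hdsup
  by_cases h : Finsupp.degree d = p.totalDegree
  · rw [if_pos h, sub_self] at hdsup; exact absurd rfl hdsup
  · rw [if_neg h, sub_zero] at hdsup
    exact lt_of_le_of_ne (le_totalDegree (MvPolynomial.mem_support_iff.mpr hdsup)) h

private lemma td_mul {p q : MvPolynomial σ K} (hp : p ≠ 0) (hq : q ≠ 0) :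
    (p * q).totalDegree = p.totalDegree + q.totalDegree := by
  rcases Nat.eq_zero_or_pos (p.totalDegree + q.totalDegree) with h0 | hpos
  · rw [h0]
    exact Nat.le_antisymm ((totalDegree_mul p q).trans h0.le) (Nat.zero_le _)
  set a := homogeneousComponent p.totalDegree p with ha
  set b := homogeneousComponent q.totalDegree q with hb
  have hane : a ≠ 0 := hc_top_ne_zero hp
  have hbne : b ≠ 0 := hc_top_ne_zero hq
  have hhom : (a * b).IsHomogeneous (p.totalDegree + q.totalDegree) :=
    (homogeneousComponent_isHomogeneous _ p).mul (homogeneousComponent_isHomogeneous _ q)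
  have htd : (a * b).totalDegree = p.totalDegree + q.totalDegree :=
    hhom.totalDegree (mul_ne_zero hane hbne)
  have key : p * q = a * b + ((p - a) * q + a * (q - b)) := by ring
  have hatd : a.totalDegree ≤ p.totalDegree :=
    (homogeneousComponent_isHomogeneous _ p).totalDegree_le
  have h1 : ((p - a) * q + a * (q - b)).totalDegree < p.totalDegree + q.totalDegree := by
    apply lt_of_le_of_lt (totalDegree_add _ _)
    rw [max_lt_iff]
    constructor
    · rcases eq_or_ne (p - a) 0 with h | h
      · rw [h, zero_mul, totalDegree_zero]; exact hpos
      · have hplt : 0 < p.totalDegree := by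
          rcases Nat.eq_zero_or_pos p.totalDegree with h0' | h0'
          · exact absurd (by rw [ha, hc_top_eq_self h0', sub_self]) h
          · exact h0'
        have h2 := td_sub_hc_lt (p := p) hplt
        rw [← ha] at h2
        have h3 := totalDegree_mul (p - a) q
        have h4 := totalDegree_mul p q
        have h5 : q.totalDegree ≤ q.totalDegree := le_rfl
        omega
    · rcases eq_or_ne (q - b) 0 with h | h
      · rw [h, mul_zero, totalDegree_zero]; exact hpos
      · have hqlt : 0 < q.totalDegree := by
          rcases Nat.eq_zero_or_pos q.totalDegree with h0' | h0'
          · exact absurd (by rw [hb, hc_top_eq_self h0', sub_self]) h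
          · exact h0'
        have h2 := td_sub_hc_lt (p := q) hqlt
        rw [← hb] at h2
        have h3 := totalDegree_mul a (q - b)
        omega
  rw [key, totalDegree_add_eq_left_of_totalDegree_lt (htd ▸ h1), htd]

private lemma td_pow {p : MvPolynomial σ K} (hp : p ≠ 0) (n : ℕ) :
    (p ^ n).totalDegree = n * p.totalDegree := by
  induction n with
  | zero => simp
  | succ n ih =>
    rw [pow_succ, td_mul (pow_ne_zero n hp) hp, ih]
    ring

end Deg


section Aeval
variable {K : Type*} {σ : Type*} [CommRing K] [IsDomain K]


private lemma td_aeval {f : MvPolynomial σ K} (hf : 0 < f.totalDegree)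
    (b : Polynomial K) :
    (Polynomial.aeval f b).totalDegree = b.natDegree * f.totalDegree := by
  have hfne : f ≠ 0 := fun h => by simp [h] at hf
  suffices H : ∀ n (b : Polynomial K), b.natDegree ≤ n →
      (Polynomial.aeval f b).totalDegree = b.natDegree * f.totalDegree from H _ b le_rfl
  intro n
  induction n with
  | zero =>
    intro b hb
    obtain ⟨a, rfl⟩ := Polynomial.natDegree_eq_zero.mp (Nat.le_zero.mp hb)
    simp [algebraMap_eq]
  | succ n ih =>
    intro b hb
    rcases Nat.eq_zero_or_pos b.natDegree with h0 | hpos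
    · obtain ⟨a, rfl⟩ := Polynomial.natDegree_eq_zero.mp h0
      simp [algebraMap_eq]
    have hbne : b ≠ 0 := fun h => by simp [h] at hpos
    have hlc : b.leadingCoeff ≠ 0 := Polynomial.leadingCoeff_ne_zero.mpr hbne
    have hmain : Polynomial.aeval f b =
        Polynomial.aeval f b.eraseLead + MvPolynomial.C b.leadingCoeff * f ^ b.natDegree := by
      conv_lhs => rw [← Polynomial.eraseLead_add_C_mul_X_pow b]
      rw [map_add, map_mul, Polynomial.aeval_C, map_pow, Polynomial.aeval_X, algebraMap_eq]
    have htop : (MvPolynomial.C b.leadingCoeff * f ^ b.natDegree).totalDegree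
        = b.natDegree * f.totalDegree := by
      rw [td_mul (by simpa using hlc) (pow_ne_zero _ hfne), totalDegree_C, td_pow hfne]
      omega
    have herase : (Polynomial.aeval f b.eraseLead).totalDegree
        < b.natDegree * f.totalDegree := by
      rcases eq_or_ne b.eraseLead 0 with h | h
      · rw [h, map_zero, totalDegree_zero]
        exact Nat.mul_pos hpos hf
      · have hlt : b.eraseLead.natDegree < b.natDegree :=
          lt_of_le_of_lt (Polynomial.eraseLead_natDegree_le b) (by omega)
        rw [ih b.eraseLead (by omega)]
        exact Nat.mul_lt_mul_of_lt_of_le hlt le_rfl hf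
    rw [hmain, totalDegree_add_eq_right_of_totalDegree_lt (by rw [htop]; exact herase), htop]

end Aeval

/-- The standard equivalence `K[x,y] ≃ (K[x])[y]` sending `X 1` to `Y` and `X 0` to `C x`. -/
noncomputable def Ee (K : Type*) [CommSemiring K] :
    MvPolynomial (Fin 2) K ≃ₐ[K] Polynomial (Polynomial K) :=
  (MvPolynomial.renameEquiv K (Equiv.swap (0 : Fin 2) 1)).trans
    ((MvPolynomial.finSuccEquiv K 1).trans
      (Polynomial.mapAlgEquiv
        ((MvPolynomial.finSuccEquiv K 0).trans
          (Polynomial.mapAlgEquiv (MvPolynomial.isEmptyAlgEquiv K (Fin 0))))))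

lemma Ee_X1 (K : Type*) [CommSemiring K] : Ee K (X 1) = Polynomial.X := by
  simp [Ee, finSuccEquiv_X_zero, show Equiv.swap (0 : Fin 2) 1 1 = 0 by decide]

lemma Ee_X0 (K : Type*) [CommSemiring K] : Ee K (X 0) = Polynomial.C Polynomial.X := by
  have h1 : (Equiv.swap (0 : Fin 2) 1) 0 = 1 := by decide
  have h2 : (1 : Fin 2) = Fin.succ 0 := rfl
  unfold Ee
  rw [AlgEquiv.trans_apply, AlgEquiv.trans_apply, renameEquiv_apply, rename_X, h1, h2,
    finSuccEquiv_X_succ]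
  rw [Polynomial.coe_mapAlgEquiv, Polynomial.map_C]
  congr 1
  simp [finSuccEquiv_X_zero]

theorem stmt_17 (K : Type*) [Field K]
    (φ ψ : MvPolynomial (Fin 2) K ≃ₐ[K] MvPolynomial (Fin 2) K)
    (hf : φ (X 0) = ψ (X 0))
    (hdeg : 1 < (φ (X 0)).totalDegree)
    (hg : (φ (X 1)).totalDegree < (φ (X 0)).totalDegree)
    (hg1 : (ψ (X 1)).totalDegree < (φ (X 0)).totalDegree) :
    ∃ c d : K, c ≠ 0 ∧ ψ (X 1) = MvPolynomial.C c * φ (X 1) + MvPolynomial.C d := by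
  classical
  set f := φ (X 0) with hf0
  set θ : MvPolynomial (Fin 2) K ≃ₐ[K] MvPolynomial (Fin 2) K := ψ.trans φ.symm with hθ
  have hθ0 : θ (X 0) = X 0 := by
    show φ.symm (ψ (X 0)) = X 0
    rw [← hf, AlgEquiv.symm_apply_apply]
  set E := Ee K with hE
  set τ : Polynomial (Polynomial K) ≃ₐ[K] Polynomial (Polynomial K) :=
    (E.symm.trans θ).trans E with hτ
  have hτ_apply : ∀ p, τ p = E (θ (E.symm p)) := fun p => rfl
  have hτCX : τ (Polynomial.C Polynomial.X) = Polynomial.C Polynomial.X := by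
    rw [hτ_apply, ← Ee_X0, ← hE, AlgEquiv.symm_apply_apply, hθ0, hE, Ee_X0]
  have hτC : ∀ a : Polynomial K, τ (Polynomial.C a) = Polynomial.C a := by
    intro a
    have key : τ.toAlgHom.comp Polynomial.CAlgHom = Polynomial.CAlgHom :=
      Polynomial.algHom_ext (by simpa using hτCX)
    exact DFunLike.congr_fun key a
  have hτsymmC : ∀ a : Polynomial K, τ.symm (Polynomial.C a) = Polynomial.C a := by
    intro a
    conv_lhs => rw [← hτC a]
    exact τ.symm_apply_apply _
  set u := τ Polynomial.X with hu
  set v := τ.symm Polynomial.X with hv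
  have hτcomp : ∀ p, τ p = p.comp u := by
    intro p
    induction p using Polynomial.induction_on with
    | C a => rw [hτC, Polynomial.C_comp]
    | add p q hp hq => rw [map_add, Polynomial.add_comp, hp, hq]
    | monomial n a ih =>
      rw [map_mul, map_pow, hτC, Polynomial.mul_comp, Polynomial.C_comp, Polynomial.pow_comp,
        Polynomial.X_comp]
  have hτsymmcomp : ∀ p, τ.symm p = p.comp v := by
    intro p
    induction p using Polynomial.induction_on with
    | C a => rw [hτsymmC, Polynomial.C_comp]
    | add p q hp hq => rw [map_add, Polynomial.add_comp, hp, hq]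
    | monomial n a ih =>
      rw [map_mul, map_pow, hτsymmC, Polynomial.mul_comp, Polynomial.C_comp, Polynomial.pow_comp,
        Polynomial.X_comp]
  have huv : u.comp v = Polynomial.X := by
    rw [← hτsymmcomp u, hu, AlgEquiv.symm_apply_apply]
  have hvu : v.comp u = Polynomial.X := by
    rw [← hτcomp v, hv, AlgEquiv.apply_symm_apply]
  have hnd : u.natDegree = 1 ∧ v.natDegree = 1 := by
    have h1 : u.natDegree * v.natDegree = 1 := by
      rw [← Polynomial.natDegree_comp, huv, Polynomial.natDegree_X]
    exact ⟨Nat.eq_one_of_mul_eq_one_right h1, Nat.eq_one_of_mul_eq_one_left h1⟩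
  have hlc : IsUnit u.leadingCoeff := by
    have h2 : u.leadingCoeff * v.leadingCoeff ^ u.natDegree = 1 := by
      rw [← Polynomial.leadingCoeff_comp (by rw [hnd.2]; omega), huv, Polynomial.leadingCoeff_X]
    rw [hnd.1, pow_one] at h2
    exact isUnit_iff_exists_inv.mpr ⟨_, h2⟩
  obtain ⟨c, hcu, hcC⟩ := Polynomial.isUnit_iff.mp hlc
  have hcoeff1 : u.coeff 1 = Polynomial.C c := by
    rw [← hnd.1]
    exact hcC ▸ rfl
  set b := u.coeff 0 with hb
  have hu_eq : u = Polynomial.C (Polynomial.C c) * Polynomial.X + Polynomial.C b := by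
    conv_lhs => rw [Polynomial.eq_X_add_C_of_natDegree_le_one (le_of_eq hnd.1)]
    rw [hcoeff1]
  have hEsymmX : E.symm Polynomial.X = X 1 := by
    rw [← Ee_X1 K, ← hE, AlgEquiv.symm_apply_apply]
  have hECb : ∀ a : Polynomial K, E.symm (Polynomial.C a) =
      Polynomial.aeval (X 0 : MvPolynomial (Fin 2) K) a := by
    intro a
    have key : E.symm.toAlgHom.comp Polynomial.CAlgHom =
        Polynomial.aeval (X 0 : MvPolynomial (Fin 2) K) := by
      apply Polynomial.algHom_ext
      show E.symm (Polynomial.C Polynomial.X) = Polynomial.aeval (X 0) Polynomial.X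
      rw [Polynomial.aeval_X, ← Ee_X0 K, ← hE, AlgEquiv.symm_apply_apply]
    exact DFunLike.congr_fun key a
  have hθX1 : θ (X 1) = MvPolynomial.C c * X 1 +
      Polynomial.aeval (X 0 : MvPolynomial (Fin 2) K) b := by
    have h3 : θ (X 1) = E.symm u := by
      rw [hu, hτ_apply, hEsymmX, AlgEquiv.symm_apply_apply]
    rw [h3, hu_eq, map_add, map_mul, hEsymmX, hECb, hECb, Polynomial.aeval_C,
      MvPolynomial.algebraMap_eq]
  have hψ1 : ψ (X 1) = MvPolynomial.C c * φ (X 1) + Polynomial.aeval f b := by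
    have h4 : φ (θ (X 1)) = ψ (X 1) := by
      show φ (φ.symm (ψ (X 1))) = ψ (X 1)
      exact φ.apply_symm_apply _
    rw [← h4, hθX1, map_add, map_mul, ← MvPolynomial.algebraMap_eq, AlgEquiv.commutes,
      MvPolynomial.algebraMap_eq, Polynomial.aeval_algHom_apply]
  have hD0 : 0 < f.totalDegree := by omega
  have hrd : (Polynomial.aeval f b : MvPolynomial (Fin 2) K).totalDegree < f.totalDegree := by
    have h5 : (Polynomial.aeval f b : MvPolynomial (Fin 2) K) =
        ψ (X 1) - MvPolynomial.C c * φ (X 1) := by rw [hψ1]; ring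
    have h6 := MvPolynomial.totalDegree_sub (ψ (X 1)) (MvPolynomial.C c * φ (X 1))
    have h7 := totalDegree_mul (MvPolynomial.C c) (φ (X 1))
    rw [totalDegree_C] at h7
    rw [h5]
    omega
  have hb0 : b.natDegree = 0 := by
    have h8 := td_aeval hD0 b
    by_contra h9
    have : f.totalDegree ≤ b.natDegree * f.totalDegree :=
      Nat.le_mul_of_pos_left _ (Nat.pos_of_ne_zero h9)
    omega
  obtain ⟨d, hd⟩ := Polynomial.natDegree_eq_zero.mp hb0
  refine ⟨c, d, hcu.ne_zero, ?_⟩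
  rw [hψ1, ← hd, Polynomial.aeval_C, MvPolynomial.algebraMap_eq]
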